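/- For all real x ≥ 0, x ≤ x·cosh(2x) − sinh(2x)·log(cosh x). -/

import Mathlib

open Real

private lemma key_ineq (x : ℝ) (hx : 0 ≤ x) :
    Real.cosh x * Real.log (Real.cosh x) ≤ x * Real.sinh x := by
  set f : ℝ → ℝ := fun y => y * Real.sinh y - Real.cosh y * Real.log (Real.cosh y) with hf
  have hderiv : ∀ y : ℝ, HasDerivAt f
      (y * Real.cosh y - Real.sinh y * Real.log (Real.cosh y)) y := by
    intro y
    have h1 : HasDerivAt (fun y : ℝ => y * Real.sinh y)
        (1 * Real.sinh y + y * Real.cosh y) y :=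
      (hasDerivAt_id y).mul (Real.hasDerivAt_sinh y)
    have h2 : HasDerivAt (fun y : ℝ => Real.log (Real.cosh y))
        ((Real.cosh y)⁻¹ * Real.sinh y) y :=
      (Real.hasDerivAt_log (Real.cosh_pos y).ne').comp y (Real.hasDerivAt_cosh y)
    have h3 : HasDerivAt (fun y : ℝ => Real.cosh y * Real.log (Real.cosh y))
        (Real.sinh y * Real.log (Real.cosh y) + Real.cosh y * ((Real.cosh y)⁻¹ * Real.sinh y)) y :=
      (Real.hasDerivAt_cosh y).mul h2
    have := h1.sub h3
    convert this using 1
    · rfl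
    · rfl
    · rfl
    rw [← mul_assoc, mul_inv_cancel₀ (Real.cosh_pos y).ne']
    ring
  have hmono : MonotoneOn f (Set.Ici (0 : ℝ)) := by
    apply monotoneOn_of_deriv_nonneg (convex_Ici 0)
    · exact (Continuous.sub (continuous_id.mul Real.continuous_sinh)
        (Real.continuous_cosh.mul ((Real.continuous_cosh).log
          (fun y => (Real.cosh_pos y).ne')))).continuousOn
    · intro y _
      exact (hderiv y).differentiableAt.differentiableWithinAt
    · intro y hy
      rw [(hderiv y).deriv]
      have hy0 : 0 < y := by simpa using hy
      have hlog : Real.log (Real.cosh y) ≤ y := by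
        rw [Real.log_le_iff_le_exp (Real.cosh_pos y)]
        rw [Real.cosh_eq]
        have : Real.exp (-y) ≤ Real.exp y := Real.exp_le_exp.2 (by linarith)
        linarith
      have hlog0 : 0 ≤ Real.log (Real.cosh y) :=
        Real.log_nonneg (Real.one_le_cosh y)
      have hs : 0 ≤ Real.sinh y := by
        rw [← Real.sinh_zero]; exact Real.sinh_le_sinh.2 hy0.le
      have := mul_le_mul (Real.sinh_lt_cosh y).le hlog hlog0 (Real.cosh_pos y).le
      nlinarith [Real.cosh_pos y]
  have h0 : f 0 ≤ f x := hmono (Set.self_mem_Ici) hx hx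
  simp only [hf, Real.sinh_zero, Real.cosh_zero, Real.log_one] at h0
  linarith [h0]

theorem le_mul_cosh_sub_sinh_mul_log_cosh (x : ℝ) (hx : 0 ≤ x) :
    x ≤ x * Real.cosh (2 * x) - Real.sinh (2 * x) * Real.log (Real.cosh x) := by
  have hkey := key_ineq x hx
  have hs : 0 ≤ Real.sinh x := by
    rw [← Real.sinh_zero]; exact Real.sinh_le_sinh.2 hx
  rw [Real.cosh_two_mul, Real.sinh_two_mul, Real.cosh_sq]
  nlinarith [mul_le_mul_of_nonneg_left hkey hs]
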